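/- Let p \ge 5 be a prime and n \in {0,1,3}. Then: (i) \mu_p({(A,B) \in \mathbb{Z}_p^2 : v_p(4A^3+27B^2) = 0 and the reduction T^3 + \bar{A}T + \bar{B} \in F_p[T] has exactly n roots in F_p}) equals (p^2-1)/(3p^2) if n=0, (p-1)/(2p) if n=1, and (p-1)(p-2)/(6p^2) if n=3; and (ii) \mu_p({(A,B) \in \mathbb{Z}_p^2 : v_p(A) \ge 2, v_p(B) \ge 3, v_p(4A^3+27B^2) = 6, and the reduction of T^3 + (A/p^2)T + (B/p^3) in F_p[T] has exactly n roots in F_p}) equals (p^2-1)/(3p^7) if n=0, (p-1)/(2p^6) if n=1, and (p-1)(p-2)/(6p^7) if n=3. -/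

import Mathlib

open MeasureTheory
open scoped ENNReal

noncomputable section

instance (p : ℕ) [Fact p.Prime] : MeasurableSpace ℤ_[p] := borel _
instance (p : ℕ) [Fact p.Prime] : BorelSpace ℤ_[p] := ⟨rfl⟩

set_option linter.unusedSectionVars false
set_option linter.unusedVariables false

open Finset

namespace DensityAux

open scoped Classical

variable {p : ℕ} [Fact p.Prime]

section basic
variable (hp : 5 ≤ p)
include hp

lemma hchar (k : ℕ) (hk : 0 < k) (hkp : k < p) : (k : ZMod p) ≠ 0 := by
  rw [Ne, ZMod.natCast_eq_zero_iff]
  exact fun h => absurd (Nat.le_of_dvd hk h) (not_le.2 hkp)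

lemma two_ne : (2 : ZMod p) ≠ 0 := by
  have := hchar hp 2 (by norm_num) (by omega); simpa using this

lemma three_ne : (3 : ZMod p) ≠ 0 := by
  have := hchar hp 3 (by norm_num) (by omega); simpa using this

lemma four_ne : (4 : ZMod p) ≠ 0 := by
  have h := two_ne hp
  have : (4 : ZMod p) = 2 * 2 := by norm_num
  rw [this]; exact mul_ne_zero h h

end basic

/-- the root set of the depressed cubic -/
def rts (a b : ZMod p) : Set (ZMod p) := {x | x ^ 3 + a * x + b = 0}

lemma mem_rts {a b x : ZMod p} : x ∈ rts a b ↔ x ^ 3 + a * x + b = 0 := Iff.rfl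

/-- two distinct roots determine the coefficients -/
lemma coeff_of_two_roots {a b r s : ZMod p} (hrs : r ≠ s)
    (hr : r ∈ rts a b) (hs : s ∈ rts a b) :
    a = -(r ^ 2 + r * s + s ^ 2) ∧ b = r * s * (r + s) := by
  have h1 : r ^ 3 + a * r + b = 0 := hr
  have h2 : s ^ 3 + a * s + b = 0 := hs
  have hrs' : r - s ≠ 0 := sub_ne_zero.2 hrs
  have key : (r - s) * (a + (r ^ 2 + r * s + s ^ 2)) = 0 := by linear_combination h1 - h2
  have ha : a = -(r ^ 2 + r * s + s ^ 2) := by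
    have h := (mul_eq_zero.1 key).resolve_left hrs'
    linear_combination h
  refine ⟨ha, ?_⟩
  linear_combination h1 - r * ha

lemma rts_triple (r s : ZMod p) :
    rts (-(r ^ 2 + r * s + s ^ 2)) (r * s * (r + s)) = {r, s, -(r + s)} := by
  ext x
  simp only [mem_rts, Set.mem_insert_iff, Set.mem_singleton_iff]
  constructor
  · intro h
    have key : (x - r) * (x - s) * (x + (r + s)) = 0 := by linear_combination h
    rcases mul_eq_zero.1 key with h' | h'
    · rcases mul_eq_zero.1 h' with h'' | h''
      · exact Or.inl (by linear_combination h'')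
      · exact Or.inr (Or.inl (by linear_combination h''))
    · exact Or.inr (Or.inr (by linear_combination h'))
  · rintro (rfl | rfl | rfl) <;> ring

lemma disc_triple (r s : ZMod p) :
    4 * (-(r ^ 2 + r * s + s ^ 2)) ^ 3 + 27 * (r * s * (r + s)) ^ 2 =
      -((r - s) * (2 * r + s) * (r + 2 * s)) ^ 2 := by ring

lemma rts_single {r d : ZMod p} (hp : 5 ≤ p) (hnsq : ¬ IsSquare (r ^ 2 - 4 * d)) :
    rts (d - r ^ 2) (-(r * d)) = {r} := by
  ext x
  simp only [mem_rts, Set.mem_singleton_iff]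
  constructor
  · intro h
    have key : (x - r) * (x ^ 2 + r * x + d) = 0 := by linear_combination h
    rcases mul_eq_zero.1 key with h' | h'
    · linear_combination h'
    · exfalso
      exact hnsq ⟨2 * x + r, by linear_combination -4 * h'⟩
  · rintro rfl; ring

lemma disc_single (r d : ZMod p) :
    4 * (d - r ^ 2) ^ 3 + 27 * (-(r * d)) ^ 2 = -(2 * r ^ 2 + d) ^ 2 * (r ^ 2 - 4 * d) := by
  ring

lemma ncard_mem_013 {a b : ZMod p} (hp : 5 ≤ p) (h : 4 * a ^ 3 + 27 * b ^ 2 ≠ 0) :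
    (rts a b).ncard = 0 ∨ (rts a b).ncard = 1 ∨ (rts a b).ncard = 3 := by
  by_cases hle : (rts a b).ncard ≤ 1
  · omega
  · right; right
    have hlt : 1 < (rts a b).ncard := by omega
    obtain ⟨r, s, hr, hs, hrs⟩ := (Set.one_lt_ncard_iff (Set.toFinite _)).1 hlt
    obtain ⟨ha, hb⟩ := coeff_of_two_roots hrs hr hs
    rw [ha, hb, rts_triple]
    rw [ha, hb, disc_triple, neg_ne_zero, pow_ne_zero_iff (by norm_num : (2:ℕ) ≠ 0)] at h
    · have h1 : r - s ≠ 0 := fun hh => h (by rw [hh]; ring)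
      have h2 : 2 * r + s ≠ 0 := fun hh => h (by rw [mul_comm ((r-s)*(2*r+s)), ← mul_assoc, hh]; ring)
      have h3 : r + 2 * s ≠ 0 := fun hh => h (by rw [hh]; ring)
      refine Set.ncard_eq_three.mpr ⟨r, s, -(r + s), hrs, ?_, ?_, rfl⟩
      · intro hh; exact h2 (by linear_combination hh)
      · intro hh; exact h3 (by linear_combination hh)

end DensityAux

namespace DensityAux

variable {p : ℕ} [Fact p.Prime]

/-- pairs (a,b) with nonzero discriminant and exactly n roots -/
noncomputable def Sn (p : ℕ) [Fact p.Prime] (n : ℕ) : Finset (ZMod p × ZMod p) :=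
  univ.filter (fun ab => 4 * ab.1 ^ 3 + 27 * ab.2 ^ 2 ≠ 0 ∧ (rts ab.1 ab.2).ncard = n)

lemma mem_Sn {n : ℕ} {ab : ZMod p × ZMod p} :
    ab ∈ Sn p n ↔ 4 * ab.1 ^ 3 + 27 * ab.2 ^ 2 ≠ 0 ∧ (rts ab.1 ab.2).ncard = n := by
  simp [Sn]

section S3

/-- ordered pairs of prospective distinct roots -/
def U3 (p : ℕ) [Fact p.Prime] : Finset (ZMod p × ZMod p) :=
  univ.filter (fun rs => rs.1 ≠ rs.2 ∧ rs.2 ≠ -(2 * rs.1) ∧ rs.1 ≠ -(2 * rs.2))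

def g3 : ZMod p × ZMod p → ZMod p × ZMod p :=
  fun rs => (-(rs.1 ^ 2 + rs.1 * rs.2 + rs.2 ^ 2), rs.1 * rs.2 * (rs.1 + rs.2))

lemma g3_maps (hp : 5 ≤ p) : ∀ rs ∈ U3 p, g3 rs ∈ Sn p 3 := by
  rintro ⟨r, s⟩ h
  simp only [U3, mem_filter] at h
  obtain ⟨-, hrs, h2, h3⟩ := h
  have h2' : 2 * r + s ≠ 0 := fun hh => h2 (by linear_combination hh)
  have h3' : r + 2 * s ≠ 0 := fun hh => h3 (by linear_combination hh)
  rw [mem_Sn]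
  constructor
  · show 4 * (-(r ^ 2 + r * s + s ^ 2)) ^ 3 + 27 * (r * s * (r + s)) ^ 2 ≠ 0
    rw [disc_triple, neg_ne_zero, pow_ne_zero_iff (by norm_num : (2:ℕ) ≠ 0)]
    exact mul_ne_zero (mul_ne_zero (sub_ne_zero.2 hrs) h2') h3'
  · show (rts (-(r ^ 2 + r * s + s ^ 2)) (r * s * (r + s))).ncard = 3
    rw [rts_triple]
    refine Set.ncard_eq_three.mpr ⟨r, s, -(r + s), hrs, ?_, ?_, rfl⟩
    · intro hh; exact h2' (by linear_combination hh)
    · intro hh; exact h3' (by linear_combination hh)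

lemma fiber_card (hp : 5 ≤ p) : ∀ ab ∈ Sn p 3, (U3 p |>.filter (fun rs => g3 rs = ab)).card = 6 := by
  rintro ⟨a, b⟩ hab
  rw [mem_Sn] at hab
  obtain ⟨hd, hn⟩ := hab
  have hfin : (rts a b).Finite := Set.toFinite _
  have key : (U3 p |>.filter (fun rs => g3 rs = (a, b))) = hfin.toFinset.offDiag := by
    ext ⟨x, y⟩
    simp only [mem_filter, Finset.mem_offDiag, Set.Finite.mem_toFinset, U3, g3, mem_univ,
      true_and, Prod.mk.injEq]
    constructor
    · rintro ⟨⟨hxy, -, -⟩, ha, hb⟩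
      refine ⟨?_, ?_, hxy⟩
      · show x ^ 3 + a * x + b = 0; rw [← ha, ← hb]; ring
      · show y ^ 3 + a * y + b = 0; rw [← ha, ← hb]; ring
    · rintro ⟨hx, hy, hxy⟩
      obtain ⟨ha, hb⟩ := coeff_of_two_roots hxy hx hy
      have hdisc : 4 * a ^ 3 + 27 * b ^ 2 = -((x - y) * (2 * x + y) * (x + 2 * y)) ^ 2 := by
        rw [ha, hb]; exact disc_triple x y
      rw [hdisc, neg_ne_zero, pow_ne_zero_iff (by norm_num : (2:ℕ) ≠ 0)] at hd
      refine ⟨⟨hxy, ?_, ?_⟩, ha.symm, hb.symm⟩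
      · intro hh
        exact hd (by rw [show (2*x+y) = 0 by linear_combination hh]; ring)
      · intro hh
        exact hd (by rw [show (x+2*y) = 0 by linear_combination hh]; ring)
  rw [key, Finset.offDiag_card]
  have : hfin.toFinset.card = 3 := by
    rw [← Set.ncard_eq_toFinset_card _ hfin, hn]
  rw [this]

lemma card_U3 (hp : 5 ≤ p) : (U3 p).card = (p - 1) * (p - 2) := by
  have h2 := two_ne hp
  have h3 := three_ne hp
  rw [Finset.card_eq_sum_card_fiberwise (f := Prod.fst) (t := univ) (fun x _ => mem_univ _)]
  have hfib : ∀ r : ZMod p, ((U3 p).filter (fun rs => rs.1 = r)).card =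
      if r = 0 then p - 1 else p - 3 := by
    intro r
    have hbij : ((U3 p).filter (fun rs => rs.1 = r)).card =
        (univ.filter (fun s : ZMod p => s ≠ r ∧ s ≠ -(2 * r) ∧ s ≠ -(2⁻¹ * r))).card := by
      apply Finset.card_nbij' (i := Prod.snd) (j := fun s => (r, s))
      · rintro ⟨x, y⟩ hx
        simp only [Finset.mem_coe, U3, mem_filter, mem_univ, true_and] at hx ⊢
        obtain ⟨⟨hxy, hy2, hx2⟩, rfl⟩ := hx
        refine ⟨fun hh => hxy hh.symm, hy2, fun hh => hx2 ?_⟩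
        rw [hh]; field_simp
      · intro s hs
        simp only [Finset.mem_coe, U3, mem_filter, mem_univ, true_and] at hs ⊢
        obtain ⟨h1, hh2, hh3⟩ := hs
        refine ⟨⟨fun hh => h1 hh.symm, hh2, fun hh => hh3 ?_⟩, trivial⟩
        field_simp at hh ⊢
        linear_combination hh
      · rintro ⟨x, y⟩ hx
        simp only [Finset.mem_coe, mem_filter] at hx
        simp [hx.2]
      · intro s hs; rfl
    rw [hbij]
    have hset : (univ.filter (fun s : ZMod p => s ≠ r ∧ s ≠ -(2 * r) ∧ s ≠ -(2⁻¹ * r))) =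
        univ \ {r, -(2 * r), -(2⁻¹ * r)} := by
      ext s
      simp only [mem_filter, mem_univ, true_and, mem_sdiff, Finset.mem_insert,
        Finset.mem_singleton]
      tauto
    rw [hset, Finset.card_sdiff_of_subset (Finset.subset_univ _), Finset.card_univ, ZMod.card]
    by_cases hr : r = 0
    · subst hr
      simp
    · have e1 : r ≠ -(2 * r) := fun hh => hr <|
        (mul_eq_zero.1 (show (3 : ZMod p) * r = 0 by linear_combination hh)).resolve_left h3
      have i2 : (2 : ZMod p) * 2⁻¹ = 1 := mul_inv_cancel₀ h2
      have e2 : r ≠ -(2⁻¹ * r) := fun hh => hr <|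
        (mul_eq_zero.1 (show (3 : ZMod p) * r = 0 by linear_combination 2 * hh - r * i2)).resolve_left h3
      have e3 : -(2 * r) ≠ -(2⁻¹ * r) := fun hh => hr <|
        (mul_eq_zero.1 (show (3 : ZMod p) * r = 0 by linear_combination -2 * hh + r * i2)).resolve_left h3
      rw [Finset.card_insert_of_notMem (by simp [e1, e2]),
        Finset.card_insert_of_notMem (by simp [e3]), Finset.card_singleton, if_neg hr]
  calc ∑ r : ZMod p, ((U3 p).filter (fun rs => rs.1 = r)).card
      = ∑ r : ZMod p, ((p - 3) + if r = 0 then 2 else 0) := by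
        refine Finset.sum_congr rfl fun r _ => ?_
        rw [hfib r]; split <;> omega
    _ = (p - 1) * (p - 2) := by
        rw [Finset.sum_add_distrib, Finset.sum_const, Finset.card_univ, ZMod.card,
          Finset.sum_ite_eq' univ (0 : ZMod p) (fun _ => 2)]
        simp only [mem_univ, if_true, smul_eq_mul]
        zify [show 3 ≤ p by omega, show 1 ≤ p by omega, show 2 ≤ p by omega]
        ring

lemma card_S3 (hp : 5 ≤ p) : 6 * (Sn p 3).card = (p - 1) * (p - 2) := by
  have h1 := Finset.card_eq_sum_card_fiberwise (g3_maps hp)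
  rw [Finset.sum_congr rfl (fiber_card hp), Finset.sum_const, smul_eq_mul] at h1
  rw [mul_comm, ← h1, card_U3 hp]

end S3

end DensityAux

namespace DensityAux

variable {p : ℕ} [Fact p.Prime]

section S1

lemma card_nonsquares (hp : 5 ≤ p) :
    2 * (univ.filter (fun z : ZMod p => ¬ IsSquare z)).card = p - 1 := by
  have hchar2 : ringChar (ZMod p) ≠ 2 := by
    rw [ZMod.ringChar_zmod_n]; omega
  have hsum := quadraticChar_sum_zero hchar2
  set Sq := univ.filter (fun z : ZMod p => IsSquare z) with hSq
  set NS := univ.filter (fun z : ZMod p => ¬ IsSquare z) with hNS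
  have hzero : (0 : ZMod p) ∈ Sq := by
    simp only [hSq, mem_filter, mem_univ, true_and]
    exact ⟨0, by ring⟩
  have hsplit : ∑ a : ZMod p, quadraticChar (ZMod p) a =
      ∑ a ∈ Sq, quadraticChar (ZMod p) a + ∑ a ∈ NS, quadraticChar (ZMod p) a :=
    (Finset.sum_filter_add_sum_filter_not univ _ _).symm
  have hNSsum : ∑ a ∈ NS, quadraticChar (ZMod p) a = -(NS.card : ℤ) := by
    rw [Finset.sum_congr rfl (fun a ha =>
      quadraticChar_neg_one_iff_not_isSquare.mpr ((mem_filter.1 ha).2)), Finset.sum_const]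
    simp [hNS]
  have hSqsum : ∑ a ∈ Sq, quadraticChar (ZMod p) a = (Sq.card : ℤ) - 1 := by
    rw [← Finset.add_sum_erase Sq _ hzero]
    have : ∑ a ∈ Sq.erase 0, quadraticChar (ZMod p) a = ((Sq.erase 0).card : ℤ) := by
      rw [Finset.sum_congr rfl (fun a ha =>
        (quadraticChar_one_iff_isSquare (Finset.mem_erase.1 ha).1).mpr
          ((mem_filter.1 ((Finset.mem_erase.1 ha).2)).2)), Finset.sum_const,
        nsmul_eq_mul, mul_one]
    have hpos : 1 ≤ Sq.card := Finset.card_pos.2 ⟨0, hzero⟩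
    rw [this, Finset.card_erase_of_mem hzero, quadraticChar_zero, zero_add,
      Nat.cast_sub hpos, Nat.cast_one]
  have htot : Sq.card + NS.card = p := by
    rw [hSq, hNS, Finset.card_filter_add_card_filter_not, Finset.card_univ, ZMod.card]
  have key := hsum
  rw [hsplit, hSqsum, hNSsum] at key
  omega

def V1 (p : ℕ) [Fact p.Prime] : Finset (ZMod p × ZMod p) :=
  univ.filter (fun rd => ¬ IsSquare (rd.1 ^ 2 - 4 * rd.2))

lemma card_V1 (hp : 5 ≤ p) : 2 * (V1 p).card = p * (p - 1) := by
  have h4 := four_ne hp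
  have hfib : ∀ r : ZMod p, ((V1 p).filter (fun rs => rs.1 = r)).card =
      (univ.filter (fun z : ZMod p => ¬ IsSquare z)).card := by
    intro r
    apply Finset.card_nbij' (i := fun rd => r ^ 2 - 4 * rd.2)
      (j := fun z => (r, (r ^ 2 - z) * 4⁻¹))
    · rintro ⟨x, d⟩ hx
      simp only [Finset.mem_coe, V1, mem_filter, mem_univ, true_and] at hx ⊢
      obtain ⟨h1, rfl⟩ := hx
      exact h1
    · intro z hz
      simp only [Finset.mem_coe, V1, mem_filter, mem_univ, true_and] at hz ⊢
      refine ⟨?_, by trivial⟩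
      have : r ^ 2 - 4 * ((r ^ 2 - z) * 4⁻¹) = z := by field_simp; ring
      rw [this]; exact hz
    · rintro ⟨x, d⟩ hx
      simp only [Finset.mem_coe, V1, mem_filter, mem_univ, true_and] at hx
      obtain ⟨h1, rfl⟩ := hx
      simp only [Prod.mk.injEq]
      constructor
      · trivial
      · field_simp
        ring
    · intro z hz
      field_simp
      ring
  rw [Finset.card_eq_sum_card_fiberwise (f := Prod.fst) (t := univ) (fun x _ => mem_univ _),
    Finset.sum_congr rfl (fun r _ => hfib r), Finset.sum_const, Finset.card_univ, ZMod.card,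
    smul_eq_mul, ← mul_assoc, mul_comm 2 p, mul_assoc, card_nonsquares hp]

def h1map : ZMod p × ZMod p → ZMod p × ZMod p :=
  fun rd => (rd.2 - rd.1 ^ 2, -(rd.1 * rd.2))

lemma h1_mem (hp : 5 ≤ p) : ∀ rd ∈ V1 p, h1map rd ∈ Sn p 1 := by
  rintro ⟨r, d⟩ h
  simp only [V1, mem_filter, mem_univ, true_and] at h
  rw [mem_Sn]
  have hd4 : r ^ 2 - 4 * d ≠ 0 := fun hh => h ⟨0, by rw [hh]; ring⟩
  have hd2 : 2 * r ^ 2 + d ≠ 0 := fun hh => h ⟨3 * r, by linear_combination -4*hh⟩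
  constructor
  · show 4 * (d - r ^ 2) ^ 3 + 27 * (-(r * d)) ^ 2 ≠ 0
    rw [disc_single]
    exact mul_ne_zero (neg_ne_zero.2 (pow_ne_zero _ hd2)) hd4
  · show (rts (d - r ^ 2) (-(r * d))).ncard = 1
    rw [rts_single hp h, Set.ncard_singleton]

lemma card_S1 (hp : 5 ≤ p) : 2 * (Sn p 1).card = p * (p - 1) := by
  rw [← card_V1 hp]
  congr 1
  symm
  apply Finset.card_bij (i := fun rd _ => h1map rd) (h1_mem hp)
  · rintro ⟨r, d⟩ hrd ⟨r', d'⟩ hrd' heq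
    simp only [V1, mem_filter, mem_univ, true_and] at hrd hrd'
    have e1 : d - r ^ 2 = d' - r' ^ 2 := congrArg Prod.fst heq
    have e2 : -(r * d) = -(r' * d') := congrArg Prod.snd heq
    -- r' is a root of the cubic determined by (r,d), whose root set is {r}
    have hroots := rts_single hp hrd
    have hr' : r' ∈ rts (d - r ^ 2) (-(r * d)) := by
      rw [mem_rts, e1, e2]
      show r' ^ 3 + (d' - r' ^ 2) * r' + -(r' * d') = 0
      ring
    rw [hroots, Set.mem_singleton_iff] at hr'
    rw [hr'] at e1
    have hd : d = d' := sub_left_inj.1 e1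
    rw [hr', hd]
  · rintro ⟨a, b⟩ hab
    rw [mem_Sn] at hab
    obtain ⟨hd, hn⟩ := hab
    obtain ⟨r, hr⟩ := Set.ncard_eq_one.1 hn
    have hroot : r ^ 3 + a * r + b = 0 := by
      have : r ∈ rts a b := by rw [hr]; exact rfl
      exact this
    refine ⟨(r, a + r ^ 2), ?_, ?_⟩
    · simp only [V1, mem_filter, mem_univ, true_and]
      rintro ⟨y, hy⟩
      -- y^2 = r^2 - 4(a+r^2); then u = (y-r)/2 is a root
      have h2 := two_ne hp
      set u := (y - r) * 2⁻¹ with hu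
      have h2u : 2 * u = y - r := by
        rw [hu, mul_comm, mul_assoc, inv_mul_cancel₀ h2, mul_one]
      have husq : u ^ 2 + r * u + (a + r ^ 2) = 0 := by
        have h4 : (4 : ZMod p) * (u ^ 2 + r * u + (a + r ^ 2)) = 0 := by
          linear_combination (2 * u + y + r) * h2u - hy
        exact (mul_eq_zero.1 h4).resolve_left (four_ne hp)
      have hu_root : u ∈ rts a b := by
        rw [mem_rts]
        linear_combination (u - r) * husq + hroot
      rw [hr, Set.mem_singleton_iff] at hu_root
      -- then u = r, forcing d = -2r^2 and disc = 0
      have hd0 : a + r ^ 2 = -(2 * r ^ 2) := by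
        rw [hu_root] at husq
        linear_combination husq
      apply hd
      have ha : a = -(3 * r ^ 2) := by linear_combination hd0
      have hb : b = 2 * r ^ 3 := by linear_combination hroot - r * ha
      rw [ha, hb]; ring
    · show h1map (r, a + r ^ 2) = (a, b)
      simp only [h1map, Prod.mk.injEq]
      constructor
      · ring
      · linear_combination -hroot

end S1

end DensityAux

namespace DensityAux

variable {p : ℕ} [Fact p.Prime]

lemma card_disc_zero (hp : 5 ≤ p) :
    (univ.filter (fun ab : ZMod p × ZMod p => 4 * ab.1 ^ 3 + 27 * ab.2 ^ 2 = 0)).card = p := by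
  have h2 := two_ne hp
  have h3 := three_ne hp
  have h4 := four_ne hp
  have h27 : (27 : ZMod p) ≠ 0 := by
    have : (27 : ZMod p) = 3 * 3 * 3 := by norm_num
    rw [this]; exact mul_ne_zero (mul_ne_zero h3 h3) h3
  have := Finset.card_bij (s := (univ : Finset (ZMod p)))
    (t := univ.filter (fun ab : ZMod p × ZMod p => 4 * ab.1 ^ 3 + 27 * ab.2 ^ 2 = 0))
    (i := fun t _ => (-(3 * t ^ 2), 2 * t ^ 3))
    (fun t _ => by simp only [mem_filter, mem_univ, true_and]; ring)
    (fun t _ u _ heq => by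
      have e1 : -(3 * t ^ 2) = -(3 * u ^ 2) := congrArg Prod.fst heq
      have e2 : (2 : ZMod p) * t ^ 3 = 2 * u ^ 3 := congrArg Prod.snd heq
      have ht2 : t ^ 2 = u ^ 2 := by
        have := neg_injective e1
        exact mul_left_cancel₀ h3 this
      have ht3 : t ^ 3 = u ^ 3 := mul_left_cancel₀ h2 e2
      rcases eq_or_ne t 0 with rfl | ht0
      · have h0 : u ^ 2 = 0 := by rw [← ht2]; ring
        exact ((pow_eq_zero_iff (by norm_num : (2:ℕ) ≠ 0)).1 h0).symm
      · have ht2' : t ^ 2 ≠ 0 := pow_ne_zero _ ht0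
        have hz : (t - u) * t ^ 2 = 0 := by linear_combination ht3 - u * ht2
        exact sub_eq_zero.1 ((mul_eq_zero.1 hz).resolve_right ht2')) ?_
  · rw [← this, Finset.card_univ, ZMod.card]
  · rintro ⟨a, b⟩ hab
    simp only [mem_filter, mem_univ, true_and] at hab
    rcases eq_or_ne b 0 with rfl | hb0
    · have ha : a = 0 := by
        have h1 : (4 : ZMod p) * a ^ 3 = 0 := by linear_combination hab
        have := (mul_eq_zero.1 h1).resolve_left h4
        exact (pow_eq_zero_iff (by norm_num : (3:ℕ) ≠ 0)).1 this
      exact ⟨0, mem_univ _, by simp [ha]⟩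
    · have ha0 : a ≠ 0 := by
        intro hh
        rw [hh] at hab
        have h1 : (27 : ZMod p) * b ^ 2 = 0 := by linear_combination hab
        have := (mul_eq_zero.1 h1).resolve_left h27
        exact hb0 ((pow_eq_zero_iff (by norm_num : (2:ℕ) ≠ 0)).1 this)
      refine ⟨-(3 * b) * (2 * a)⁻¹, mem_univ _, ?_⟩
      have h2a : (2 : ZMod p) * a ≠ 0 := mul_ne_zero h2 ha0
      simp only [Prod.mk.injEq]
      set w := (2 * a)⁻¹ with hw
      have hinv : (2 * a) * w = 1 := mul_inv_cancel₀ h2a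
      constructor
      · show -(3 * (-(3 * b) * w) ^ 2) = a
        linear_combination (-(w ^ 2)) * hab + a * (2 * a * w + 1) * hinv
      · show 2 * (-(3 * b) * w) ^ 3 = b
        linear_combination (-(2 * b * w ^ 3)) * hab + b * ((2 * a * w) ^ 2 + 2 * a * w + 1) * hinv

lemma card_sum (hp : 5 ≤ p) :
    (Sn p 0).card + (Sn p 1).card + (Sn p 3).card + p = p ^ 2 := by
  classical
  have hsplit := Finset.card_filter_add_card_filter_not
    (s := (univ : Finset (ZMod p × ZMod p)))
    (p := fun ab => 4 * ab.1 ^ 3 + 27 * ab.2 ^ 2 = 0)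
  have hcard : (univ : Finset (ZMod p × ZMod p)).card = p ^ 2 := by
    rw [Finset.card_univ]
    simp [ZMod.card, sq]
  have hT : (univ.filter (fun ab : ZMod p × ZMod p => ¬ (4 * ab.1 ^ 3 + 27 * ab.2 ^ 2 = 0))) =
      (Sn p 0 ∪ Sn p 1) ∪ Sn p 3 := by
    ext ab
    simp only [mem_filter, mem_univ, true_and, Finset.mem_union, mem_Sn]
    constructor
    · intro h
      rcases ncard_mem_013 hp h with h0 | h1 | h3
      · exact Or.inl (Or.inl ⟨h, h0⟩)
      · exact Or.inl (Or.inr ⟨h, h1⟩)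
      · exact Or.inr ⟨h, h3⟩
    · rintro ((⟨h, -⟩ | ⟨h, -⟩) | ⟨h, -⟩) <;> exact h
  have hd01 : Disjoint (Sn p 0) (Sn p 1) := by
    rw [Finset.disjoint_left]
    intro ab h0 h1
    rw [mem_Sn] at h0 h1
    omega
  have hd013 : Disjoint (Sn p 0 ∪ Sn p 1) (Sn p 3) := by
    rw [Finset.disjoint_left]
    intro ab h01 h3
    rw [Finset.mem_union, mem_Sn, mem_Sn] at h01
    rw [mem_Sn] at h3
    omega
  rw [hT, Finset.card_union_of_disjoint hd013, Finset.card_union_of_disjoint hd01,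
    card_disc_zero hp, hcard] at hsplit
  omega

lemma cast_sub1 (hp : 5 ≤ p) : ((p - 1 : ℕ) : ℝ) = (p : ℝ) - 1 := by
  push_cast [Nat.cast_sub (by omega : 1 ≤ p)]; ring

lemma cardS3_real (hp : 5 ≤ p) : ((Sn p 3).card : ℝ) = ((p : ℝ) - 1) * ((p : ℝ) - 2) / 6 := by
  have h := card_S3 hp
  have : (6 : ℝ) * ((Sn p 3).card : ℝ) = ((p : ℝ) - 1) * ((p : ℝ) - 2) := by
    have := congrArg (fun k : ℕ => (k : ℝ)) h
    push_cast [Nat.cast_sub (by omega : 1 ≤ p), Nat.cast_sub (by omega : 2 ≤ p)] at this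
    linarith
  linarith

lemma cardS1_real (hp : 5 ≤ p) : ((Sn p 1).card : ℝ) = (p : ℝ) * ((p : ℝ) - 1) / 2 := by
  have h := card_S1 hp
  have : (2 : ℝ) * ((Sn p 1).card : ℝ) = (p : ℝ) * ((p : ℝ) - 1) := by
    have := congrArg (fun k : ℕ => (k : ℝ)) h
    push_cast [Nat.cast_sub (by omega : 1 ≤ p)] at this
    linarith
  linarith

lemma cardS0_real (hp : 5 ≤ p) : ((Sn p 0).card : ℝ) = ((p : ℝ) ^ 2 - 1) / 3 := by
  have h := card_sum hp
  have h3 := cardS3_real hp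
  have h1 := cardS1_real hp
  have : ((Sn p 0).card : ℝ) + ((Sn p 1).card : ℝ) + ((Sn p 3).card : ℝ) + (p : ℝ) = (p : ℝ) ^ 2 := by
    exact_mod_cast congrArg (fun k : ℕ => (k : ℝ)) h
  rw [h1, h3] at this
  linarith

end DensityAux

namespace DensityAux

open Finset

variable {p : ℕ} [Fact p.Prime]

/-- closed box (coset of `p^j ℤp × p^k ℤp`) -/
def Box (j k : ℕ) (c : ℤ_[p] × ℤ_[p]) : Set (ℤ_[p] × ℤ_[p]) :=
  {x | ‖x.1 - c.1‖ ≤ (p : ℝ) ^ (-(j : ℤ)) ∧ ‖x.2 - c.2‖ ≤ (p : ℝ) ^ (-(k : ℤ))}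

lemma measurableSet_box (j k : ℕ) (c : ℤ_[p] × ℤ_[p]) : MeasurableSet (Box j k c) := by
  have : IsClosed (Box j k c) :=
    ((isClosed_le ((continuous_fst.sub continuous_const).norm) continuous_const).inter
      (isClosed_le ((continuous_snd.sub continuous_const).norm) continuous_const))
  exact this.measurableSet

lemma box_eq_preimage (j k : ℕ) (c : ℤ_[p] × ℤ_[p]) :
    Box j k c = (fun x => -c + x) ⁻¹' (Box j k 0) := by
  ext x
  simp only [Box, Set.mem_preimage, Set.mem_setOf_eq, Prod.fst_add, Prod.snd_add, Prod.fst_neg,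
    Prod.snd_neg, Prod.fst_zero, Prod.snd_zero, sub_zero, neg_add_eq_sub, Prod.fst_sub,
    Prod.snd_sub]

variable (μ : Measure (ℤ_[p] × ℤ_[p]))

lemma measure_box_eq (hμ : μ.IsAddHaarMeasure) (j k : ℕ) (c : ℤ_[p] × ℤ_[p]) :
    μ (Box j k c) = μ (Box j k 0) := by
  haveI := hμ.toIsAddLeftInvariant
  rw [box_eq_preimage, measure_preimage_add]

lemma univ_eq_union_boxes (j k : ℕ) :
    (Set.univ : Set (ℤ_[p] × ℤ_[p])) =
      ⋃ i ∈ (range (p ^ j) ×ˢ range (p ^ k)), Box j k ((i.1 : ℤ_[p]), (i.2 : ℤ_[p])) := by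
  ext x
  simp only [Set.mem_univ, true_iff, Set.mem_iUnion]
  refine ⟨(x.1.appr j, x.2.appr k), ?_, ?_, ?_⟩
  · simp only [Finset.mem_product, Finset.mem_range]
    exact ⟨PadicInt.appr_lt _ _, PadicInt.appr_lt _ _⟩
  · exact (PadicInt.norm_le_pow_iff_mem_span_pow _ j).2 (PadicInt.appr_spec j x.1)
  · exact (PadicInt.norm_le_pow_iff_mem_span_pow _ k).2 (PadicInt.appr_spec k x.2)

lemma nat_coord_eq {j : ℕ} {a b : ℕ} (ha : a < p ^ j) (hb : b < p ^ j) {z : ℤ_[p]}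
    (h1 : ‖z - (a : ℤ_[p])‖ ≤ (p : ℝ) ^ (-(j : ℤ))) (h2 : ‖z - (b : ℤ_[p])‖ ≤ (p : ℝ) ^ (-(j : ℤ))) :
    a = b := by
  have hsub : ((a : ℤ) - (b : ℤ) : ℤ) = ((a : ℤ) - b) := rfl
  have hnorm : ‖(((a : ℤ) - b : ℤ) : ℤ_[p])‖ ≤ (p : ℝ) ^ (-(j : ℤ)) := by
    have heq : (((a : ℤ) - b : ℤ) : ℤ_[p]) = (z - (b : ℤ_[p])) + -(z - (a : ℤ_[p])) := by
      push_cast; ring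
    rw [heq]
    exact le_trans (PadicInt.nonarchimedean _ _) (max_le h2 (by rwa [norm_neg]))
  have hdvd : ((p : ℤ) ^ j) ∣ ((a : ℤ) - b) := by
    rwa [PadicInt.norm_int_le_pow_iff_dvd] at hnorm
  have : ((a : ℤ) - b) = 0 := by
    apply Int.eq_zero_of_abs_lt_dvd hdvd
    have hpa : (a : ℤ) < (p : ℤ) ^ j := by exact_mod_cast ha
    have hpb : (b : ℤ) < (p : ℤ) ^ j := by exact_mod_cast hb
    rw [abs_sub_lt_iff]
    omega
  omega

lemma boxes_disjoint (j k : ℕ) :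
    Set.PairwiseDisjoint (↑((range (p ^ j) ×ˢ range (p ^ k)) : Finset (ℕ × ℕ)) : Set (ℕ × ℕ))
      (fun i => Box j k ((i.1 : ℤ_[p]), (i.2 : ℤ_[p]))) := by
  rintro ⟨a, b⟩ hab ⟨a', b'⟩ hab' hne
  simp only [Finset.coe_product, Set.mem_prod, Finset.mem_coe, Finset.mem_range] at hab hab'
  rw [Function.onFun, Set.disjoint_left]
  rintro x ⟨h1, h2⟩ ⟨h1', h2'⟩
  exact hne (by
    have e1 : a = a' := nat_coord_eq hab.1 hab'.1 h1 h1'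
    have e2 : b = b' := nat_coord_eq hab.2 hab'.2 h2 h2'
    rw [e1, e2])

lemma measure_box (hμ : μ.IsAddHaarMeasure) (hμprob : IsProbabilityMeasure μ) (j k : ℕ)
    (c : ℤ_[p] × ℤ_[p]) : μ (Box j k c) = ((p : ℝ≥0∞) ^ (j + k))⁻¹ := by
  have hp0 : (p : ℝ≥0∞) ≠ 0 := Nat.cast_ne_zero.mpr (Fact.out : p.Prime).ne_zero
  have hptop : (p : ℝ≥0∞) ≠ ⊤ := ENNReal.natCast_ne_top p
  have key : (p : ℝ≥0∞) ^ (j + k) * μ (Box j k 0) = 1 := by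
    have h1 : μ (Set.univ) = 1 := measure_univ
    rw [univ_eq_union_boxes (p := p) j k,
      measure_biUnion_finset (boxes_disjoint j k) (fun i _ => measurableSet_box _ _ _),
      Finset.sum_congr rfl (fun i _ => measure_box_eq μ hμ j k _),
      Finset.sum_const, Finset.card_product, Finset.card_range, Finset.card_range,
      nsmul_eq_mul] at h1
    rw [← h1]
    congr 1
    push_cast
    ring
  rw [measure_box_eq μ hμ j k c]
  have hpow0 : ((p : ℝ≥0∞) ^ (j + k)) ≠ 0 := pow_ne_zero _ hp0
  have hpowtop : ((p : ℝ≥0∞) ^ (j + k)) ≠ ⊤ := ENNReal.pow_ne_top hptop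
  calc μ (Box j k 0) = ((p : ℝ≥0∞) ^ (j + k))⁻¹ * ((p : ℝ≥0∞) ^ (j + k) * μ (Box j k 0)) := by
        rw [← mul_assoc, ENNReal.inv_mul_cancel hpow0 hpowtop, one_mul]
    _ = ((p : ℝ≥0∞) ^ (j + k))⁻¹ := by rw [key, mul_one]

end DensityAux

namespace DensityAux

open PadicInt

variable {p : ℕ} [Fact p.Prime]

lemma toZMod_lift (a : ZMod p) : PadicInt.toZMod ((a.val : ℕ) : ℤ_[p]) = a := by
  rw [map_natCast]
  exact ZMod.natCast_rightInverse a

lemma toZMod_eq_iff (x : ℤ_[p]) (a : ZMod p) :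
    PadicInt.toZMod x = a ↔ ‖x - ((a.val : ℕ) : ℤ_[p])‖ ≤ (p : ℝ) ^ (-((1 : ℕ) : ℤ)) := by
  constructor
  · intro h
    refine (PadicInt.norm_le_pow_iff_mem_span_pow _ 1).2 ?_
    rw [pow_one, ← PadicInt.maximalIdeal_eq_span_p, ← PadicInt.ker_toZMod, RingHom.mem_ker,
      map_sub, toZMod_lift, h, sub_self]
  · intro h
    have h2 := (PadicInt.norm_le_pow_iff_mem_span_pow _ 1).1 h
    rw [pow_one, ← PadicInt.maximalIdeal_eq_span_p, ← PadicInt.ker_toZMod, RingHom.mem_ker,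
      map_sub, toZMod_lift, sub_eq_zero] at h2
    exact h2

lemma norm_eq_one_iff (z : ℤ_[p]) : ‖z‖ = 1 ↔ PadicInt.toZMod z ≠ 0 := by
  have hle := PadicInt.norm_le_one z
  have hker : PadicInt.toZMod z = 0 ↔ (p : ℤ_[p]) ∣ z := by
    rw [← RingHom.mem_ker, PadicInt.ker_toZMod, PadicInt.maximalIdeal_eq_span_p,
      Ideal.mem_span_singleton]
  rw [Ne, hker, ← PadicInt.norm_lt_one_iff_dvd]
  constructor
  · intro h hlt
    rw [h] at hlt
    exact lt_irrefl _ hlt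
  · intro h
    exact le_antisymm hle (not_lt.1 h)

lemma toZMod_disc (A B : ℤ_[p]) :
    PadicInt.toZMod (4 * A ^ 3 + 27 * B ^ 2) =
      4 * (PadicInt.toZMod A) ^ 3 + 27 * (PadicInt.toZMod B) ^ 2 := by
  push_cast [map_add, map_mul, map_pow, map_ofNat]
  rfl

lemma p_real_ne : (p : ℝ) ≠ 0 := by
  have := (Fact.out : p.Prime).pos
  positivity

lemma p_padic_ne : (p : ℤ_[p]) ≠ 0 := by
  intro h
  have := congrArg (fun z : ℤ_[p] => ‖z‖) h
  simp only [PadicInt.norm_p, norm_zero] at this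
  exact p_real_ne (by
    have : (p : ℝ)⁻¹ = 0 := this
    simpa [inv_eq_zero] using this)

lemma mem_box11_iff (x : ℤ_[p] × ℤ_[p]) (ab : ZMod p × ZMod p) :
    x ∈ Box 1 1 (((ab.1.val : ℕ) : ℤ_[p]), ((ab.2.val : ℕ) : ℤ_[p])) ↔
      PadicInt.toZMod x.1 = ab.1 ∧ PadicInt.toZMod x.2 = ab.2 := by
  simp only [Box, Set.mem_setOf_eq]
  rw [← toZMod_eq_iff, ← toZMod_eq_iff]

lemma coord_iff (j : ℕ) (z : ℤ_[p]) (a : ZMod p) :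
    ‖z - (p : ℤ_[p]) ^ j * ((a.val : ℕ) : ℤ_[p])‖ ≤ (p : ℝ) ^ (-(j : ℤ) - 1) ↔
      ∃ w, z = (p : ℤ_[p]) ^ j * w ∧ PadicInt.toZMod w = a := by
  have hexp : (-(j : ℤ) - 1) = -((j + 1 : ℕ) : ℤ) := by push_cast; ring
  constructor
  · intro h
    rw [hexp] at h
    have hmem := (PadicInt.norm_le_pow_iff_mem_span_pow _ (j + 1)).1 h
    rw [Ideal.mem_span_singleton] at hmem
    obtain ⟨c, hc⟩ := hmem
    refine ⟨((a.val : ℕ) : ℤ_[p]) + p * c, by linear_combination hc, ?_⟩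
    have hp0 : PadicInt.toZMod ((p : ℕ) : ℤ_[p]) = 0 := by
      rw [map_natCast, ZMod.natCast_self]
    rw [map_add, toZMod_lift, map_mul, hp0, zero_mul, add_zero]
  · rintro ⟨w, rfl, hw⟩
    have h1 : ‖w - ((a.val : ℕ) : ℤ_[p])‖ ≤ (p : ℝ) ^ (-(1 : ℤ)) := by
      simpa using (toZMod_eq_iff w a).1 hw
    rw [show (p : ℤ_[p]) ^ j * w - (p : ℤ_[p]) ^ j * ((a.val : ℕ) : ℤ_[p]) =
        (p : ℤ_[p]) ^ j * (w - ((a.val : ℕ) : ℤ_[p])) from by ring,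
      norm_mul, PadicInt.norm_p_pow]
    calc (p : ℝ) ^ (-(j : ℤ)) * ‖w - ((a.val : ℕ) : ℤ_[p])‖
        ≤ (p : ℝ) ^ (-(j : ℤ)) * (p : ℝ) ^ (-(1 : ℤ)) := by
          apply mul_le_mul_of_nonneg_left h1 (by positivity)
      _ = (p : ℝ) ^ (-(j : ℤ) - 1) := by
          rw [← zpow_add₀ p_real_ne]; ring_nf

lemma mem_box34_iff (x : ℤ_[p] × ℤ_[p]) (ab : ZMod p × ZMod p) :
    x ∈ Box 3 4 ((p : ℤ_[p]) ^ 2 * ((ab.1.val : ℕ) : ℤ_[p]),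
        (p : ℤ_[p]) ^ 3 * ((ab.2.val : ℕ) : ℤ_[p])) ↔
      (∃ A', x.1 = (p : ℤ_[p]) ^ 2 * A' ∧ PadicInt.toZMod A' = ab.1) ∧
      (∃ B', x.2 = (p : ℤ_[p]) ^ 3 * B' ∧ PadicInt.toZMod B' = ab.2) := by
  simp only [Box, Set.mem_setOf_eq]
  rw [show (-((3 : ℕ) : ℤ)) = -((2 : ℕ) : ℤ) - 1 from by norm_num,
    show (-((4 : ℕ) : ℤ)) = -((3 : ℕ) : ℤ) - 1 from by norm_num,
    coord_iff 2 x.1 ab.1, coord_iff 3 x.2 ab.2]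

lemma normII (A' B' : ℤ_[p]) :
    ‖4 * ((p : ℤ_[p]) ^ 2 * A') ^ 3 + 27 * ((p : ℤ_[p]) ^ 3 * B') ^ 2‖ = (p : ℝ) ^ (-6 : ℤ) ↔
      ‖4 * A' ^ 3 + 27 * B' ^ 2‖ = 1 := by
  have he : 4 * ((p : ℤ_[p]) ^ 2 * A') ^ 3 + 27 * ((p : ℤ_[p]) ^ 3 * B') ^ 2 =
      (p : ℤ_[p]) ^ 6 * (4 * A' ^ 3 + 27 * B' ^ 2) := by ring
  rw [he, norm_mul, PadicInt.norm_p_pow,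
    show (-((6 : ℕ) : ℤ)) = (-6 : ℤ) from by norm_num]
  constructor
  · intro h
    exact (mul_right_eq_self₀.1 h).resolve_right (zpow_ne_zero _ p_real_ne)
  · intro h
    rw [h, mul_one]

lemma setI_eq (n : ℕ) :
    {AB : ℤ_[p] × ℤ_[p] | ‖4 * AB.1 ^ 3 + 27 * AB.2 ^ 2‖ = 1 ∧
        Set.ncard {x : ZMod p |
          x ^ 3 + PadicInt.toZMod AB.1 * x + PadicInt.toZMod AB.2 = 0} = n}
      = ⋃ ab ∈ Sn p n, Box 1 1 (((ab.1.val : ℕ) : ℤ_[p]), ((ab.2.val : ℕ) : ℤ_[p])) := by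
  ext x
  simp only [Set.mem_setOf_eq, Set.mem_iUnion, exists_prop]
  constructor
  · rintro ⟨hd, hn⟩
    refine ⟨(PadicInt.toZMod x.1, PadicInt.toZMod x.2), ?_, (mem_box11_iff x _).2 ⟨rfl, rfl⟩⟩
    rw [mem_Sn]
    rw [norm_eq_one_iff, toZMod_disc] at hd
    exact ⟨hd, hn⟩
  · rintro ⟨ab, hab, hbox⟩
    obtain ⟨h1, h2⟩ := (mem_box11_iff x ab).1 hbox
    rw [mem_Sn] at hab
    constructor
    · rw [norm_eq_one_iff, toZMod_disc, h1, h2]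
      exact hab.1
    · rw [h1, h2]
      exact hab.2

lemma setII_eq (n : ℕ) :
    {AB : ℤ_[p] × ℤ_[p] |
        ∃ A' B' : ℤ_[p], AB.1 = (p : ℤ_[p]) ^ 2 * A' ∧ AB.2 = (p : ℤ_[p]) ^ 3 * B' ∧
        ‖4 * AB.1 ^ 3 + 27 * AB.2 ^ 2‖ = (p : ℝ) ^ (-6 : ℤ) ∧
        Set.ncard {x : ZMod p |
          x ^ 3 + PadicInt.toZMod A' * x + PadicInt.toZMod B' = 0} = n}
      = ⋃ ab ∈ Sn p n, Box 3 4 ((p : ℤ_[p]) ^ 2 * ((ab.1.val : ℕ) : ℤ_[p]),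
          (p : ℤ_[p]) ^ 3 * ((ab.2.val : ℕ) : ℤ_[p])) := by
  ext x
  simp only [Set.mem_setOf_eq, Set.mem_iUnion, exists_prop]
  constructor
  · rintro ⟨A', B', hA, hB, hnorm, hn⟩
    rw [hA, hB, normII] at hnorm
    refine ⟨(PadicInt.toZMod A', PadicInt.toZMod B'), ?_,
      (mem_box34_iff x _).2 ⟨⟨A', hA, rfl⟩, ⟨B', hB, rfl⟩⟩⟩
    rw [mem_Sn]
    rw [norm_eq_one_iff, toZMod_disc] at hnorm
    exact ⟨hnorm, hn⟩
  · rintro ⟨ab, hab, hbox⟩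
    obtain ⟨⟨A', hA, hA'⟩, ⟨B', hB, hB'⟩⟩ := (mem_box34_iff x ab).1 hbox
    rw [mem_Sn] at hab
    refine ⟨A', B', hA, hB, ?_, ?_⟩
    · rw [hA, hB, normII, norm_eq_one_iff, toZMod_disc, hA', hB']
      exact hab.1
    · rw [hA', hB']
      exact hab.2

variable (μ : Measure (ℤ_[p] × ℤ_[p]))

lemma measure_setI (hμ : μ.IsAddHaarMeasure) (hμprob : IsProbabilityMeasure μ) (n : ℕ) :
    μ {AB : ℤ_[p] × ℤ_[p] | ‖4 * AB.1 ^ 3 + 27 * AB.2 ^ 2‖ = 1 ∧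
        Set.ncard {x : ZMod p |
          x ^ 3 + PadicInt.toZMod AB.1 * x + PadicInt.toZMod AB.2 = 0} = n}
      = ((Sn p n).card : ℝ≥0∞) * ((p : ℝ≥0∞) ^ 2)⁻¹ := by
  rw [setI_eq n]
  have hdisj : Set.PairwiseDisjoint (↑(Sn p n) : Set (ZMod p × ZMod p))
      (fun ab => Box 1 1 (((ab.1.val : ℕ) : ℤ_[p]), ((ab.2.val : ℕ) : ℤ_[p])) :
        ZMod p × ZMod p → Set (ℤ_[p] × ℤ_[p])) := by
    intro ab _ ab' _ hne
    rw [Function.onFun, Set.disjoint_left]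
    intro x hx hx'
    obtain ⟨e1, e2⟩ := (mem_box11_iff x ab).1 hx
    obtain ⟨e1', e2'⟩ := (mem_box11_iff x ab').1 hx'
    exact hne (Prod.ext (e1.symm.trans e1') (e2.symm.trans e2'))
  rw [measure_biUnion_finset hdisj (fun ab _ => measurableSet_box _ _ _),
    Finset.sum_congr rfl (fun ab _ => measure_box μ hμ hμprob 1 1 _),
    Finset.sum_const, nsmul_eq_mul]

lemma measure_setII (hμ : μ.IsAddHaarMeasure) (hμprob : IsProbabilityMeasure μ) (n : ℕ) :
    μ {AB : ℤ_[p] × ℤ_[p] |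
        ∃ A' B' : ℤ_[p], AB.1 = (p : ℤ_[p]) ^ 2 * A' ∧ AB.2 = (p : ℤ_[p]) ^ 3 * B' ∧
        ‖4 * AB.1 ^ 3 + 27 * AB.2 ^ 2‖ = (p : ℝ) ^ (-6 : ℤ) ∧
        Set.ncard {x : ZMod p |
          x ^ 3 + PadicInt.toZMod A' * x + PadicInt.toZMod B' = 0} = n}
      = ((Sn p n).card : ℝ≥0∞) * ((p : ℝ≥0∞) ^ 7)⁻¹ := by
  rw [setII_eq n]
  have hp2 : ((p : ℤ_[p]) ^ 2) ≠ 0 := pow_ne_zero _ p_padic_ne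
  have hp3 : ((p : ℤ_[p]) ^ 3) ≠ 0 := pow_ne_zero _ p_padic_ne
  have hdisj : Set.PairwiseDisjoint (↑(Sn p n) : Set (ZMod p × ZMod p))
      (fun ab => Box 3 4 ((p : ℤ_[p]) ^ 2 * ((ab.1.val : ℕ) : ℤ_[p]),
          (p : ℤ_[p]) ^ 3 * ((ab.2.val : ℕ) : ℤ_[p])) :
        ZMod p × ZMod p → Set (ℤ_[p] × ℤ_[p])) := by
    intro ab _ ab' _ hne
    rw [Function.onFun, Set.disjoint_left]
    intro x hx hx'
    obtain ⟨⟨A', hA, hA'⟩, ⟨B', hB, hB'⟩⟩ := (mem_box34_iff x ab).1 hx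
    obtain ⟨⟨A'', hA2, hA2'⟩, ⟨B'', hB2, hB2'⟩⟩ := (mem_box34_iff x ab').1 hx'
    have eA : A' = A'' := mul_left_cancel₀ hp2 (hA.symm.trans hA2)
    have eB : B' = B'' := mul_left_cancel₀ hp3 (hB.symm.trans hB2)
    exact hne (Prod.ext (hA'.symm.trans (eA ▸ hA2')) (hB'.symm.trans (eB ▸ hB2')))
  rw [measure_biUnion_finset hdisj (fun ab _ => measurableSet_box _ _ _),
    Finset.sum_congr rfl (fun ab _ => measure_box μ hμ hμprob 3 4 _),
    Finset.sum_const, nsmul_eq_mul]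

lemma toReal_aux (m k : ℕ) (hk : 0 < k) :
    ((m : ℝ≥0∞) * ((k : ℝ≥0∞) ^ 2)⁻¹).toReal = (m : ℝ) / (k : ℝ) ^ 2 := by
  rw [ENNReal.toReal_mul, ENNReal.toReal_inv, ENNReal.toReal_pow, ENNReal.toReal_natCast,
    ENNReal.toReal_natCast, div_eq_mul_inv]

lemma toReal_aux7 (m k : ℕ) (hk : 0 < k) :
    ((m : ℝ≥0∞) * ((k : ℝ≥0∞) ^ 7)⁻¹).toReal = (m : ℝ) / (k : ℝ) ^ 7 := by
  rw [ENNReal.toReal_mul, ENNReal.toReal_inv, ENNReal.toReal_pow, ENNReal.toReal_natCast,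
    ENNReal.toReal_natCast, div_eq_mul_inv]

end DensityAux

open DensityAux in
/-- For a prime `p ≥ 5` and `μ` the Haar probability measure on `ℤ_p²`:
(i) the density of pairs `(A,B)` with `v_p(4A³+27B²) = 0` (Kodaira type `I₀`) whose reduced
cubic `T³ + ĀT + B̄` has exactly `n` roots in `F_p`, and
(ii) the density of pairs with `v_p(A) ≥ 2`, `v_p(B) ≥ 3`, `v_p(4A³+27B²) = 6` (Kodaira type
`I₀*`) whose associated cubic `T³ + (A/p²)T + (B/p³)` reduces with exactly `n` roots in `F_p`,
are as stated, for `n ∈ {0, 1, 3}`. -/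
theorem density_good_and_I0star (p : ℕ) [Fact p.Prime] (hp : 5 ≤ p)
    (μ : Measure (ℤ_[p] × ℤ_[p])) (hμ : μ.IsAddHaarMeasure) (hμprob : IsProbabilityMeasure μ)
    (n : ℕ) (hn : n = 0 ∨ n = 1 ∨ n = 3) :
    ((μ {AB : ℤ_[p] × ℤ_[p] |
        ‖4 * AB.1 ^ 3 + 27 * AB.2 ^ 2‖ = 1 ∧
        Set.ncard {x : ZMod p |
          x ^ 3 + PadicInt.toZMod AB.1 * x + PadicInt.toZMod AB.2 = 0} = n}).toReal =
      if n = 0 then ((p : ℝ) ^ 2 - 1) / (3 * (p : ℝ) ^ 2)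
      else if n = 1 then ((p : ℝ) - 1) / (2 * (p : ℝ))
      else ((p : ℝ) - 1) * ((p : ℝ) - 2) / (6 * (p : ℝ) ^ 2)) ∧
    ((μ {AB : ℤ_[p] × ℤ_[p] |
        ∃ A' B' : ℤ_[p], AB.1 = (p : ℤ_[p]) ^ 2 * A' ∧ AB.2 = (p : ℤ_[p]) ^ 3 * B' ∧
        ‖4 * AB.1 ^ 3 + 27 * AB.2 ^ 2‖ = (p : ℝ) ^ (-6 : ℤ) ∧
        Set.ncard {x : ZMod p |
          x ^ 3 + PadicInt.toZMod A' * x + PadicInt.toZMod B' = 0} = n}).toReal =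
      if n = 0 then ((p : ℝ) ^ 2 - 1) / (3 * (p : ℝ) ^ 7)
      else if n = 1 then ((p : ℝ) - 1) / (2 * (p : ℝ) ^ 6)
      else ((p : ℝ) - 1) * ((p : ℝ) - 2) / (6 * (p : ℝ) ^ 7)) := by
  have hppos : 0 < p := by omega
  have hpR : (p : ℝ) ≠ 0 := by positivity
  have h2R : (2 : ℝ) ≠ 0 := two_ne_zero
  constructor
  · rw [measure_setI μ hμ hμprob n, toReal_aux _ _ hppos]
    rcases hn with rfl | rfl | rfl
    · rw [if_pos rfl, cardS0_real hp, div_div]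
    · rw [if_neg (by norm_num), if_pos rfl, cardS1_real hp, div_div,
        div_eq_div_iff (mul_ne_zero h2R (pow_ne_zero _ hpR)) (mul_ne_zero h2R hpR)]
      ring
    · rw [if_neg (by norm_num), if_neg (by norm_num), cardS3_real hp, div_div]
  · rw [measure_setII μ hμ hμprob n, toReal_aux7 _ _ hppos]
    rcases hn with rfl | rfl | rfl
    · rw [if_pos rfl, cardS0_real hp, div_div]
    · rw [if_neg (by norm_num), if_pos rfl, cardS1_real hp, div_div,
        div_eq_div_iff (mul_ne_zero h2R (pow_ne_zero _ hpR)) (mul_ne_zero h2R (pow_ne_zero _ hpR))]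
      ring
    · rw [if_neg (by norm_num), if_neg (by norm_num), cardS3_real hp, div_div]

end
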